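/- Let f: ℝ → (−∞,+∞] be the negative logarithm: f(x) = −ln x for x > 0 and f(x) = +∞ for x ≤ 0. Then for every (x,x*) ∈ ℝ²: 𝒜_{∂f}(x,x*) = −√(−1 − 2xx*) if x > 0 and x* ≤ −1/(2x), and 𝒜_{∂f}(x,x*) = +∞ otherwise. -/

import Mathlib

noncomputable section
open scoped Classical

/-- The Fenchel conjugate of `g : ℝ → (-∞,+∞]`: `g*(y) = sup_x (xy - g(x))`. -/
def rconj (g : ℝ → EReal) : ℝ → EReal :=
  fun y => ⨆ x : ℝ, ((x * y : ℝ) : EReal) - g x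

/-- The Fenchel conjugate of `F : ℝ × ℝ → (-∞,+∞]`, as a function on `ℝ × ℝ` (dual pair
first): `F*(x*,x) = sup_{(y,y*)} (y x* + x y* - F(y,y*))`. -/
def rconj2 (F : ℝ × ℝ → EReal) : ℝ × ℝ → EReal :=
  fun p => ⨆ q : ℝ × ℝ, ((q.1 * p.1 + p.2 * q.2 : ℝ) : EReal) - F q

/-- The negative natural logarithm `f(x) = -ln x` for `x > 0`, `+∞` otherwise. -/
def negLog : ℝ → EReal :=
  fun x => if 0 < x then ((-Real.log x : ℝ) : EReal) else ⊤

/-- The subdifferential of `f : ℝ → (-∞,+∞]`. -/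
def rsubdiff (f : ℝ → EReal) : ℝ → Set ℝ :=
  fun x => {x' | ∀ y : ℝ, (((y - x) * x' : ℝ) : EReal) + f x ≤ f y}

/-- The Fitzpatrick function of a set-valued `A : ℝ ⇉ ℝ`:
`F_A(x,x*) = sup_{(y,y*) ∈ gra A} (x y* + y x* - y y*)`. -/
def rfitz (A : ℝ → Set ℝ) : ℝ × ℝ → EReal :=
  fun p => ⨆ q : ℝ × ℝ, ⨆ _ : q.2 ∈ A q.1,
    ((p.1 * q.2 + q.1 * p.2 - q.1 * q.2 : ℝ) : EReal)

/-- The Penot–Zălinescu function `𝒜_A(x,x*) = inf_{y*} (½F_A(x,x*+y*) + ½F_A*(x*-y*,x))`. -/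
def rpz (A : ℝ → Set ℝ) : ℝ × ℝ → EReal :=
  fun p => ⨅ y' : ℝ,
    ((1 / 2 : ℝ) : EReal) * rfitz A (p.1, p.2 + y')
      + ((1 / 2 : ℝ) : EReal) * rconj2 (rfitz A) (p.2 - y', p.1)

/-- The proximal-average based function
`ℬ_A(x,x*) = inf_{(y,y*)} (½F_A(x+y,x*+y*) + ½F_A*(x*-y*,x-y) + ½y² + ½y*²)`. -/
def rbw (A : ℝ → Set ℝ) : ℝ × ℝ → EReal :=
  fun p => ⨅ q : ℝ × ℝ,
    ((1 / 2 : ℝ) : EReal) * rfitz A (p.1 + q.1, p.2 + q.2)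
      + ((1 / 2 : ℝ) : EReal) * rconj2 (rfitz A) (p.2 - q.2, p.1 - q.1)
      + ((1 / 2 * q.1 ^ 2 + 1 / 2 * q.2 ^ 2 : ℝ) : EReal)

/-- `F` is autoconjugate (on `ℝ × ℝ`). -/
def rAutoconjugate (F : ℝ × ℝ → EReal) : Prop :=
  ∀ x x' : ℝ, rconj2 F (x', x) = F (x, x')

/-- `F` is a representer for `A : ℝ ⇉ ℝ`. -/
def rIsRepresenter (F : ℝ × ℝ → EReal) (A : ℝ → Set ℝ) : Prop :=
  ∀ x x' : ℝ, x' ∈ A x ↔ F (x, x') = ((x * x' : ℝ) : EReal)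

lemma mem_subdiff_negLog {x x' : ℝ} :
    x' ∈ rsubdiff negLog x ↔ 0 < x ∧ x' = -x⁻¹ := by
  constructor
  · intro h
    by_cases hx : 0 < x
    · refine ⟨hx, ?_⟩
      have key : ∀ y : ℝ, 0 < y → (y - x) * x' + -Real.log x ≤ -Real.log y := by
        intro y hy
        have h1 := h y
        simp only [negLog, if_pos hx, if_pos hy, ← EReal.coe_add] at h1
        exact_mod_cast h1
      set g : ℝ → ℝ := fun y => (-Real.log y) - ((y - x) * x' + -Real.log x) with hg
      have hmin : IsLocalMin g x := by
        have hev : ∀ᶠ y in nhds x, 0 < y := eventually_gt_nhds hx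
        filter_upwards [hev] with y hy
        have := key y hy
        simp only [hg]
        simp only [sub_self, mul_zero, zero_add, sub_self, neg_add_rev]
        linarith
      have hd : HasDerivAt g (-x⁻¹ - x') x := by
        have h1 : HasDerivAt (fun y : ℝ => -Real.log y) (-x⁻¹) x :=
          (Real.hasDerivAt_log hx.ne').neg
        have h2 : HasDerivAt (fun y : ℝ => (y - x) * x' + -Real.log x) x' x := by
          simpa using (((hasDerivAt_id x).sub_const x).mul_const x').add_const (-Real.log x)
        exact h1.sub h2
      have := hmin.hasDerivAt_eq_zero hd
      linarith
    · exfalso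
      have h1 := h 1
      simp only [negLog, if_neg hx, if_pos one_pos] at h1
      rw [EReal.coe_add_top] at h1
      simp at h1
  · rintro ⟨hx, rfl⟩
    intro y
    by_cases hy : 0 < y
    · simp only [negLog, if_pos hx, if_pos hy, ← EReal.coe_add, EReal.coe_le_coe_iff]
      have hlog : Real.log (y/x) ≤ y/x - 1 := Real.log_le_sub_one_of_pos (by positivity)
      rw [Real.log_div hy.ne' hx.ne'] at hlog
      have : (y - x) * -x⁻¹ = -(y/x) + 1 := by field_simp; ring
      rw [this]
      linarith
    · simp only [negLog, if_neg hy]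
      exact le_top

lemma le_rfitz {A : ℝ → Set ℝ} {q : ℝ × ℝ} (hq : q.2 ∈ A q.1) (p : ℝ × ℝ) :
    ((p.1 * q.2 + q.1 * p.2 - q.1 * q.2 : ℝ) : EReal) ≤ rfitz A p :=
by
  rw [rfitz]
  exact @le_iSup₂ EReal (ℝ × ℝ) (fun q => q.2 ∈ A q.1) _
    (fun q _ => ((p.1 * q.2 + q.1 * p.2 - q.1 * q.2 : ℝ) : EReal)) q hq

lemma rfitz_le {A : ℝ → Set ℝ} {p : ℝ × ℝ} {c : EReal}
    (h : ∀ q : ℝ × ℝ, q.2 ∈ A q.1 → ((p.1 * q.2 + q.1 * p.2 - q.1 * q.2 : ℝ) : EReal) ≤ c) :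
    rfitz A p ≤ c := by
  rw [rfitz]
  exact iSup_le fun q => iSup_le fun hq => h q hq

-- value of the term at (y, -y⁻¹)
lemma term_val (x s y : ℝ) (hy : 0 < y) :
    x * (-y⁻¹) + y * s - y * (-y⁻¹) = -(x/y) + y * s + 1 := by
  field_simp
  ring

lemma coe_le_of_forall_sub {c : ℝ} {S : EReal} (h : ∀ ε : ℝ, 0 < ε → ((c - ε : ℝ) : EReal) ≤ S) :
    (c : EReal) ≤ S := by
  by_contra hc
  push_neg at hc
  induction S using EReal.rec with
  | bot => exact EReal.coe_ne_bot _ (le_bot_iff.mp (h 1 one_pos))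
  | coe d =>
      have hd : d < c := by exact_mod_cast hc
      have := h ((c - d)/2) (by linarith)
      rw [EReal.coe_le_coe_iff] at this
      linarith
  | top => exact not_top_lt hc

lemma fitz_eq (x s : ℝ) :
    rfitz (rsubdiff negLog) (x, s) =
      if 0 ≤ x ∧ s ≤ 0 then ((1 - 2 * Real.sqrt (x * (-s)) : ℝ) : EReal) else ⊤ := by
  have hterm : ∀ y : ℝ, 0 < y →
      ((x * (-y⁻¹) + y * s - y * (-y⁻¹) : ℝ) : EReal) ≤ rfitz (rsubdiff negLog) (x, s) := by
    intro y hy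
    exact le_rfitz (q := (y, -y⁻¹)) (mem_subdiff_negLog.2 ⟨hy, rfl⟩) (x, s)
  split_ifs with hc
  · obtain ⟨hx, hs⟩ := hc
    apply le_antisymm
    · apply rfitz_le
      intro q hq
      obtain ⟨hy, hq2⟩ := mem_subdiff_negLog.1 hq
      simp only [EReal.coe_le_coe_iff]
      rw [hq2]
      set y := q.1 with hyq
      rw [term_val x s y hy]
      -- AM-GM
      have ha : (0:ℝ) ≤ x / y := div_nonneg hx hy.le
      have hb : (0:ℝ) ≤ y * (-s) := mul_nonneg hy.le (by linarith)
      have h1 : Real.sqrt (x/y) * Real.sqrt (y * (-s)) = Real.sqrt (x * (-s)) := by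
        rw [← Real.sqrt_mul ha]
        congr 1
        field_simp
      have h2 : Real.sqrt (x/y) ^ 2 = x/y := Real.sq_sqrt ha
      have h3 : Real.sqrt (y * (-s)) ^ 2 = y * (-s) := Real.sq_sqrt hb
      nlinarith [sq_nonneg (Real.sqrt (x/y) - Real.sqrt (y * (-s)))]
    · rcases eq_or_lt_of_le hx with hx0 | hx0
      · -- x = 0
        obtain rfl : x = 0 := hx0.symm
        simp only [zero_mul, Real.sqrt_zero, mul_zero, sub_zero]
        apply coe_le_of_forall_sub
        intro ε hε
        set y : ℝ := ε / (1 - s) with hy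
        have hy0 : 0 < y := div_pos hε (by linarith)
        refine le_trans ?_ (hterm y hy0)
        rw [term_val _ s y hy0, EReal.coe_le_coe_iff]
        have h1s : (1:ℝ) - s ≠ 0 := by linarith
        have key : y * (1 - s) = ε := by rw [hy]; field_simp
        have h1 : -ε ≤ y * s := by nlinarith
        have h0 : (0:ℝ) / y = 0 := zero_div y
        rw [h0]
        linarith
      rcases eq_or_lt_of_le hs with hs0 | hs0
      · -- s = 0
        obtain rfl : s = 0 := hs0
        simp only [neg_zero, mul_zero, Real.sqrt_zero, sub_zero]
        apply coe_le_of_forall_sub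
        intro ε hε
        set y : ℝ := (x + 1) / ε with hy
        have hy0 : 0 < y := div_pos (by linarith) hε
        refine le_trans ?_ (hterm y hy0)
        rw [term_val x 0 y hy0, EReal.coe_le_coe_iff]
        have key : y * ε = x + 1 := by rw [hy]; field_simp
        have hxy : x / y ≤ ε := by rw [div_le_iff₀ hy0]; nlinarith
        linarith
      · -- x > 0, s < 0
        set y : ℝ := Real.sqrt x / Real.sqrt (-s) with hy
        have hsx : (0:ℝ) < Real.sqrt x := Real.sqrt_pos.2 hx0
        have hss : (0:ℝ) < Real.sqrt (-s) := Real.sqrt_pos.2 (by linarith)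
        have hy0 : 0 < y := by positivity
        refine le_trans ?_ (hterm y hy0)
        rw [term_val x s y hy0, EReal.coe_le_coe_iff]
        have h2 : Real.sqrt x ^ 2 = x := Real.sq_sqrt hx0.le
        have h3 : Real.sqrt (-s) ^ 2 = -s := Real.sq_sqrt (by linarith)
        have h1 : Real.sqrt x * Real.sqrt (-s) = Real.sqrt (x * (-s)) :=
          (Real.sqrt_mul hx0.le _).symm
        have e1 : x / y = Real.sqrt x * Real.sqrt (-s) := by
          rw [hy]
          field_simp
          nlinarith
        have e2 : y * s = -(Real.sqrt x * Real.sqrt (-s)) := by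
          rw [hy]
          field_simp
          nlinarith
        rw [e1, e2, h1]
        linarith
  · -- top case
    rw [EReal.eq_top_iff_forall_lt]
    intro r
    push_neg at hc
    rcases lt_or_ge x 0 with hx | hx
    · -- x < 0, take y small
      set y : ℝ := min 1 ((-x) / (|r| + |s| + 1)) with hy
      have hy0 : 0 < y := lt_min one_pos (div_pos (by linarith) (by positivity))
      refine lt_of_lt_of_le ?_ (hterm y hy0)
      rw [term_val x s y hy0, EReal.coe_lt_coe_iff]
      have h1 : -(x/y) ≥ |r| + |s| + 1 := by
        rw [ge_iff_le, ← neg_div, le_div_iff₀ hy0]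
        have : y ≤ (-x) / (|r| + |s| + 1) := min_le_right _ _
        rw [le_div_iff₀ (by positivity)] at this
        linarith
      have h2 : y * s ≥ -|s| := by
        have hy1 : y ≤ 1 := min_le_left _ _
        have := abs_nonneg s
        have h3 : y * |s| ≤ |s| := by nlinarith
        have h4 : -(y * |s|) ≤ y * s := by
          have := neg_abs_le s
          nlinarith
        linarith
      have := le_abs_self r
      linarith
    · -- then s > 0, take y large
      have hs : 0 < s := hc hx
      set y : ℝ := max 1 ((r + x)/s) with hy
      have hy0 : 0 < y := lt_of_lt_of_le one_pos (le_max_left _ _)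
      refine lt_of_lt_of_le ?_ (hterm y hy0)
      rw [term_val x s y hy0, EReal.coe_lt_coe_iff]
      have h1 : -(x/y) ≥ -x := by
        have hy1 : 1 ≤ y := le_max_left _ _
        rw [ge_iff_le, neg_le_neg_iff, div_le_iff₀ hy0]
        nlinarith
      have h2 : y * s ≥ r + x := by
        have : (r + x)/s ≤ y := le_max_right _ _
        rw [div_le_iff₀ hs] at this
        linarith
      linarith

lemma conj_fitz (t x : ℝ) :
    rconj2 (rfitz (rsubdiff negLog)) (t, x) =
      if 0 < x ∧ x * t ≤ -1 then ((-1 : ℝ) : EReal) else ⊤ := by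
  have hF : ∀ q : ℝ × ℝ, rfitz (rsubdiff negLog) q =
      if 0 ≤ q.1 ∧ q.2 ≤ 0 then ((1 - 2 * Real.sqrt (q.1 * (-q.2)) : ℝ) : EReal) else ⊤ := by
    intro q; rw [← fitz_eq q.1 q.2]
  -- value of term at a good point
  have hterm : ∀ y y' : ℝ, 0 ≤ y → y' ≤ 0 →
      ((y * t + x * y' - (1 - 2 * Real.sqrt (y * (-y'))) : ℝ) : EReal)
        ≤ rconj2 (rfitz (rsubdiff negLog)) (t, x) := by
    intro y y' hy hy'
    have h0 := le_iSup (fun q : ℝ × ℝ =>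
      ((q.1 * (t, x).1 + (t, x).2 * q.2 : ℝ) : EReal) - rfitz (rsubdiff negLog) q)
      ((y, y') : ℝ × ℝ)
    rw [hF (y, y'), if_pos ⟨hy, hy'⟩, ← EReal.coe_sub] at h0
    exact h0
  split_ifs with hc
  · obtain ⟨hx, ht⟩ := hc
    apply le_antisymm
    · apply iSup_le
      intro q
      rw [hF q]
      split_ifs with hq
      · obtain ⟨hy, hy'⟩ := hq
        rw [← EReal.coe_sub, EReal.coe_le_coe_iff]
        set a := Real.sqrt q.1 with hadef
        set b := Real.sqrt (-q.2) with hbdef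
        have ha : 0 ≤ a := Real.sqrt_nonneg _
        have hb : 0 ≤ b := Real.sqrt_nonneg _
        have ha2 : a ^ 2 = q.1 := Real.sq_sqrt hy
        have hb2 : b ^ 2 = -q.2 := Real.sq_sqrt (by linarith)
        have hab : Real.sqrt (q.1 * (-q.2)) = a * b := Real.sqrt_mul hy _
        have hq1 : q.1 = a ^ 2 := ha2.symm
        have hq2 : q.2 = -(b ^ 2) := by linarith
        rw [hab, hq1, hq2]
        nlinarith [sq_nonneg (a - x * b), mul_nonneg (sq_nonneg a) (by nlinarith : (0:ℝ) ≤ -(x*t+1)), mul_pos hx hx]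
      · rw [EReal.sub_top]
        exact bot_le
    · have := hterm 0 0 le_rfl le_rfl
      simpa using this
  · rw [EReal.eq_top_iff_forall_lt]
    intro r
    rcases lt_trichotomy x 0 with hx | hx | hx
    · -- x < 0
      have hxne : x ≠ 0 := hx.ne
      set m : ℝ := max 0 (r + 1 - x) with hm
      have hm0 : 0 ≤ m := le_max_left _ _
      refine lt_of_lt_of_le ?_
        (hterm 0 (m / x) le_rfl (div_nonpos_of_nonneg_of_nonpos hm0 hx.le))
      rw [EReal.coe_lt_coe_iff]
      have h2 : x * (m / x) = m := by field_simp
      have h3 : r + 1 - x ≤ m := le_max_right _ _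
      have hs0 : Real.sqrt ((0:ℝ) * (-(m / x))) = 0 := by simp
      rw [hs0, h2]
      linarith
    · -- x = 0
      obtain ⟨b, hb0, hb2⟩ : ∃ b : ℝ, 0 ≤ b ∧ r + 1 - t < 2 * b :=
        ⟨max 0 (r + 1 - t) + 1, by have := le_max_left (0:ℝ) (r + 1 - t); linarith,
          by have h1 := le_max_right (0:ℝ) (r + 1 - t)
             have h2 := le_max_left (0:ℝ) (r + 1 - t); linarith⟩
      refine lt_of_lt_of_le ?_ (hterm 1 (-(b ^ 2)) zero_le_one (by nlinarith))
      rw [EReal.coe_lt_coe_iff]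
      have hs : Real.sqrt (1 * (-(-(b ^ 2)))) = b := by
        rw [neg_neg, one_mul, Real.sqrt_sq hb0]
      rw [hs, hx]
      linarith
    · -- x > 0 and x*t > -1
      push_neg at hc
      have ht : -1 < x * t := hc hx
      have hδ : 0 < x * (x * t + 1) := by nlinarith
      obtain ⟨B, hB0, hB1⟩ : ∃ B : ℝ, 0 < B ∧ r + 1 < B * (x * (x * t + 1)) := by
        refine ⟨max 0 ((r + 1) / (x * (x * t + 1))) + 1,
          by have := le_max_left (0:ℝ) ((r + 1) / (x * (x * t + 1))); linarith, ?_⟩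
        have h4 := le_max_right (0:ℝ) ((r + 1) / (x * (x * t + 1)))
        have h5 := le_max_left (0:ℝ) ((r + 1) / (x * (x * t + 1)))
        rw [div_le_iff₀ hδ] at h4
        nlinarith
      refine lt_of_lt_of_le ?_ (hterm (x ^ 2 * B) (-B) (by positivity) (by linarith))
      rw [EReal.coe_lt_coe_iff]
      have hs : Real.sqrt (x ^ 2 * B * (-(-B))) = x * B := by
        rw [neg_neg]
        have h6 : x ^ 2 * B * B = (x * B) ^ 2 := by ring
        rw [h6, Real.sqrt_sq (by positivity)]
      rw [hs]
      nlinarith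

lemma term_eq (x x' y' : ℝ) :
    ((1 / 2 : ℝ) : EReal) * rfitz (rsubdiff negLog) (x, x' + y')
      + ((1 / 2 : ℝ) : EReal) * rconj2 (rfitz (rsubdiff negLog)) (x' - y', x)
    = if (0 ≤ x ∧ x' + y' ≤ 0) ∧ 0 < x ∧ x * (x' - y') ≤ -1
      then (((1 - 2 * Real.sqrt (x * (-(x' + y'))))/2 + (-1)/2 : ℝ) : EReal) else ⊤ := by
  rw [fitz_eq x (x' + y'), conj_fitz (x' - y') x]
  by_cases h1 : 0 ≤ x ∧ x' + y' ≤ 0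
  · by_cases h2 : 0 < x ∧ x * (x' - y') ≤ -1
    · rw [if_pos h1, if_pos h2, if_pos ⟨h1, h2⟩, ← EReal.coe_mul, ← EReal.coe_mul,
        ← EReal.coe_add, EReal.coe_eq_coe_iff]
      ring
    · rw [if_pos h1, if_neg h2,
        if_neg (show ¬((0 ≤ x ∧ x' + y' ≤ 0) ∧ 0 < x ∧ x * (x' - y') ≤ -1) from
          fun h => h2 h.2),
        EReal.coe_mul_top_of_pos (by norm_num), ← EReal.coe_mul, EReal.coe_add_top]
  · rw [if_neg h1,
      if_neg (show ¬((0 ≤ x ∧ x' + y' ≤ 0) ∧ 0 < x ∧ x * (x' - y') ≤ -1) from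
        fun h => h1 h.1),
      EReal.coe_mul_top_of_pos (by norm_num)]
    by_cases h2 : 0 < x ∧ x * (x' - y') ≤ -1
    · rw [if_pos h2, ← EReal.coe_mul, EReal.top_add_coe]
    · rw [if_neg h2, EReal.coe_mul_top_of_pos (by norm_num)]
      rfl


/-- Remark 5.2. For the negative logarithm `f`,
`𝒜_{∂f}(x,x*) = -√(-1-2xx*)` if `x > 0` and `x* ≤ -1/(2x)`, and `+∞` otherwise. -/
theorem stmt14 :
    ∀ x x' : ℝ,
      rpz (rsubdiff negLog) (x, x')
        = if 0 < x ∧ x' ≤ -(1 / (2 * x))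
          then ((-Real.sqrt (-1 - 2 * x * x') : ℝ) : EReal)
          else ⊤ := by
  intro x x'
  have hrpz : rpz (rsubdiff negLog) (x, x')
      = ⨅ y' : ℝ, ((1 / 2 : ℝ) : EReal) * rfitz (rsubdiff negLog) (x, x' + y')
        + ((1 / 2 : ℝ) : EReal) * rconj2 (rfitz (rsubdiff negLog)) (x' - y', x) := rfl
  rw [hrpz]
  split_ifs with h
  · obtain ⟨hx, hx'⟩ := h
    have h2x : (0:ℝ) < 2 * x := by linarith
    have key : 2 * x * x' ≤ -1 := by
      have h5 := mul_le_mul_of_nonneg_left hx' (le_of_lt h2x)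
      have h6 : 2 * x * (-(1 / (2 * x))) = -1 := by field_simp
      rw [h6] at h5
      linarith
    apply le_antisymm
    · refine iInf_le_of_le (x' + 1/x) ?_
      rw [term_eq]
      have hinv : x * (1/x) = 1 := by field_simp
      rw [if_pos ⟨⟨hx.le, by nlinarith⟩, hx, by rw [show x * (x' - (x' + 1/x)) = -(x * (1/x)) by ring, hinv]⟩]
      have harg : x * (-(x' + (x' + 1/x))) = -1 - 2*x*x' := by
        field_simp
        ring
      rw [harg, EReal.coe_le_coe_iff]
      have : (1 - 2 * Real.sqrt (-1 - 2*x*x'))/2 + (-1)/2 = -Real.sqrt (-1 - 2*x*x') := by ring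
      rw [this]
    · apply le_iInf
      intro y'
      rw [term_eq]
      split_ifs with hcond
      · obtain ⟨⟨hx0, h1⟩, hx1, hle⟩ := hcond
        rw [EReal.coe_le_coe_iff]
        have harg : x * (-(x' + y')) ≤ -1 - 2*x*x' := by nlinarith
        have h3 := Real.sqrt_le_sqrt harg
        linarith
      · exact le_top
  · rw [iInf_eq_top]
    intro y'
    rw [term_eq, if_neg]
    rintro ⟨⟨hx0, h1⟩, hx1, h2⟩
    apply h
    refine ⟨hx1, ?_⟩
    have k1 : x * (x' + y') ≤ 0 := mul_nonpos_of_nonneg_of_nonpos hx1.le h1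
    have key : 2 * x * x' ≤ -1 := by nlinarith
    rw [le_neg, div_le_iff₀ (by linarith : (0:ℝ) < 2 * x)]
    nlinarith
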